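/- Let f_n = Σ_{j=1}^k (1/j) f_{n,j} where each f_{n,j} ∈ l(T_n) takes values in [0,1], is supported on a set S_j ⊆ T_n, and Σ_{j=1}^{k-1} (1/j) f_{n,j} is constant on Γ_1(S_k). Suppose further that for each k' ≤ k, Σ_{j=1}^{k'-1}(1/j) f_{n,j} is constant on Γ_1(S_{k'}) and f_{n,j} for j > k' vanish outside sets disjoint in the appropriate nested fashion so the telescoping applies at each stage. Then E_p^n(f_n) = Σ_{j=1}^k j^{-p} E_p^n(f_{n,j}). -/
import Mathlib


open Classical in
noncomputable def energyF {T X : Type*} (p : ℝ) (K : T → Set X) (A : Finset T)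
    (f : T → ℝ) : ℝ :=
  (1 / 2) * ∑ w ∈ A, ∑ v ∈ A, if (K w ∩ K v).Nonempty then |f w - f v| ^ p else 0

def Gamma1 {T X : Type*} (K : T → Set X) (B : Set T) : Set T :=
  B ∪ {v | ∃ w ∈ B, (K v ∩ K w).Nonempty}

lemma energy_add_step {T X : Type*} (p : ℝ) (hp : 1 ≤ p) (K : T → Set X) (A : Finset T)
    (g f : T → ℝ) (S : Set T) (a : ℝ) (ha : 0 ≤ a)
    (hsupp : ∀ w, w ∉ S → f w = 0)
    (hconst : ∃ c : ℝ, ∀ w ∈ Gamma1 K S, g w = c) :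
    energyF p K A (fun w => g w + a * f w)
      = energyF p K A g + a ^ p * energyF p K A f := by
  classical
  obtain ⟨c, hc⟩ := hconst
  have hp0 : p ≠ 0 := by linarith
  have key : ∀ w v, (K w ∩ K v).Nonempty →
      |g w + a * f w - (g v + a * f v)| ^ p
        = |g w - g v| ^ p + a ^ p * |f w - f v| ^ p := by
    intro w v hwv
    by_cases hb : w ∈ Gamma1 K S ∧ v ∈ Gamma1 K S
    · rw [show g w + a * f w - (g v + a * f v)
          = (g w - g v) + a * (f w - f v) by ring, hc w hb.1, hc v hb.2, sub_self,
        zero_add, abs_zero, Real.zero_rpow hp0, zero_add, abs_mul, abs_of_nonneg ha,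
        Real.mul_rpow ha (abs_nonneg _)]
    · have hwS : w ∉ S := by
        intro hwS
        exact hb ⟨Or.inl hwS, Or.inr ⟨w, hwS, Set.inter_comm (K w) (K v) ▸ hwv⟩⟩
      have hvS : v ∉ S := by
        intro hvS
        exact hb ⟨Or.inr ⟨v, hvS, hwv⟩, Or.inl hvS⟩
      rw [hsupp w hwS, hsupp v hvS]
      simp [Real.zero_rpow hp0]
  simp only [energyF]
  have heq : (∑ w ∈ A, ∑ v ∈ A,
        if (K w ∩ K v).Nonempty then |g w + a * f w - (g v + a * f v)| ^ p else 0)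
      = (∑ w ∈ A, ∑ v ∈ A, if (K w ∩ K v).Nonempty then |g w - g v| ^ p else 0)
        + a ^ p * ∑ w ∈ A, ∑ v ∈ A,
            if (K w ∩ K v).Nonempty then |f w - f v| ^ p else 0 := by
    rw [Finset.mul_sum, ← Finset.sum_add_distrib]
    refine Finset.sum_congr rfl fun w _ => ?_
    rw [Finset.mul_sum, ← Finset.sum_add_distrib]
    refine Finset.sum_congr rfl fun v _ => ?_
    split_ifs with h
    · exact key w v h
    · simp
  rw [heq]; ring

lemma energy_telescoping_aux {T X : Type*} (p : ℝ) (hp : 1 ≤ p) (K : T → Set X)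
    (A : Finset T) (fs : ℕ → T → ℝ) (S : ℕ → Set T) :
    ∀ k : ℕ,
      (∀ j ∈ Finset.Icc 1 k, ∀ w, w ∉ S j → fs j w = 0) →
      (∀ k' ∈ Finset.Icc 1 k, ∃ c : ℝ, ∀ w ∈ Gamma1 K (S k'),
        ∑ j ∈ Finset.Icc 1 (k' - 1), (j : ℝ)⁻¹ * fs j w = c) →
      energyF p K A (fun w => ∑ j ∈ Finset.Icc 1 k, (j : ℝ)⁻¹ * fs j w)
        = ∑ j ∈ Finset.Icc 1 k, (j : ℝ) ^ (-p) * energyF p K A (fs j) := by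
  intro k
  induction k with
  | zero =>
    intro _ _
    simp [energyF, Real.zero_rpow (by linarith : p ≠ 0)]
  | succ k ih =>
    intro hsupp hconst
    have h1 : 1 ≤ k + 1 := Nat.succ_le_succ (Nat.zero_le k)
    have hmem : ∀ j ∈ Finset.Icc 1 k, j ∈ Finset.Icc 1 (k + 1) := by
      intro j hj
      rw [Finset.mem_Icc] at hj ⊢
      exact ⟨hj.1, hj.2.trans (Nat.le_succ k)⟩
    have hfun : (fun w => ∑ j ∈ Finset.Icc 1 (k + 1), (j : ℝ)⁻¹ * fs j w)
        = fun w => (∑ j ∈ Finset.Icc 1 k, (j : ℝ)⁻¹ * fs j w)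
            + ((k + 1 : ℕ) : ℝ)⁻¹ * fs (k + 1) w := by
      funext w
      rw [Finset.sum_Icc_succ_top h1]
    rw [hfun, Finset.sum_Icc_succ_top h1]
    have hcst : ∃ c : ℝ, ∀ w ∈ Gamma1 K (S (k + 1)),
        (∑ j ∈ Finset.Icc 1 k, (j : ℝ)⁻¹ * fs j w) = c := by
      obtain ⟨c, hc⟩ := hconst (k + 1) (Finset.mem_Icc.mpr ⟨h1, le_refl _⟩)
      exact ⟨c, by simpa using hc⟩
    rw [energy_add_step p hp K A _ (fs (k + 1)) (S (k + 1)) _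
        (inv_nonneg.mpr (by positivity))
        (hsupp (k + 1) (Finset.mem_Icc.mpr ⟨h1, le_refl _⟩)) hcst]
    rw [ih (fun j hj => hsupp j (hmem j hj)) (fun k' hk' => hconst k' (hmem k' hk'))]
    congr 1
    rw [Real.inv_rpow (by positivity), ← Real.rpow_neg (by positivity)]

theorem energy_telescoping {T X : Type*} (p : ℝ) (hp : 1 ≤ p) (K : T → Set X)
    (A : Finset T) (k : ℕ) (hk : 1 ≤ k) (fs : ℕ → T → ℝ) (S : ℕ → Set T)
    (hrange : ∀ j ∈ Finset.Icc 1 k, ∀ w, 0 ≤ fs j w ∧ fs j w ≤ 1)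
    (hsupp : ∀ j ∈ Finset.Icc 1 k, ∀ w, w ∉ S j → fs j w = 0)
    (hconst : ∀ k' ∈ Finset.Icc 1 k, ∃ c : ℝ, ∀ w ∈ Gamma1 K (S k'),
      ∑ j ∈ Finset.Icc 1 (k' - 1), (j : ℝ)⁻¹ * fs j w = c) :
    energyF p K A (fun w => ∑ j ∈ Finset.Icc 1 k, (j : ℝ)⁻¹ * fs j w)
      = ∑ j ∈ Finset.Icc 1 k, (j : ℝ) ^ (-p) * energyF p K A (fs j) :=
  energy_telescoping_aux p hp K A fs S k hsupp hconst
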